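/- Let w be a word over {a,b,α,β} and let u be an infinite binary word fixed by the composed morphism φ_w. If u starts with the letter 0 and w starts with the letter a, then w contains no occurrence of b or β (i.e., w ∈ {a,α}*). -/

import Mathlib

/-- φ_a : 0 ↦ 0, 1 ↦ 10. -/
def φa : Monoid.End (FreeMonoid Bool) :=
  FreeMonoid.lift fun x => if x then FreeMonoid.of true * FreeMonoid.of false else FreeMonoid.of false

/-- φ_b : 0 ↦ 0, 1 ↦ 01. -/
def φb : Monoid.End (FreeMonoid Bool) :=
  FreeMonoid.lift fun x => if x then FreeMonoid.of false * FreeMonoid.of true else FreeMonoid.of false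

/-- φ_α : 0 ↦ 01, 1 ↦ 1. -/
def φα : Monoid.End (FreeMonoid Bool) :=
  FreeMonoid.lift fun x => if x then FreeMonoid.of true else FreeMonoid.of false * FreeMonoid.of true

/-- φ_β : 0 ↦ 10, 1 ↦ 1. -/
def φβ : Monoid.End (FreeMonoid Bool) :=
  FreeMonoid.lift fun x => if x then FreeMonoid.of true else FreeMonoid.of true * FreeMonoid.of false

/-- The exchange morphism E : 0 ↦ 1, 1 ↦ 0. -/
def Eend : Monoid.End (FreeMonoid Bool) := FreeMonoid.map not

inductive Letter | a | b | α | β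
deriving DecidableEq

/-- The elementary Sturmian morphism associated to a letter of {a, b, α, β}. -/
def phiOf : Letter → Monoid.End (FreeMonoid Bool)
  | Letter.a => φa
  | Letter.b => φb
  | Letter.α => φα
  | Letter.β => φβ

/-- The composed morphism φ_w = φ_{w₀} ∘ φ_{w₁} ∘ ⋯ ∘ φ_{w_{n-1}}. -/
def phiW (w : List Letter) : Monoid.End (FreeMonoid Bool) := (w.map phiOf).prod

/-- `w` is a normalized name: it contains no factor α a^k β and no factor a α^k b. -/
def NormalizedW (w : List Letter) : Prop :=
  ∀ k : ℕ, ¬ ([Letter.α] ++ List.replicate k Letter.a ++ [Letter.β]) <:+: w ∧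
           ¬ ([Letter.a] ++ List.replicate k Letter.α ++ [Letter.b]) <:+: w

/-- The prefix of length `n` of an infinite binary word, as an element of the free monoid. -/
def prefWord (u : ℕ → Bool) (n : ℕ) : FreeMonoid Bool :=
  FreeMonoid.ofList ((List.range n).map u)

/-- `InfMap f u v` : the infinite word `v` is the image of the infinite word `u` under the
endomorphism `f` (extended letterwise), i.e. the image of every prefix of `u` is a prefix of `v`. -/
def InfMap (f : Monoid.End (FreeMonoid Bool)) (u v : ℕ → Bool) : Prop :=
  ∀ n k, k < (FreeMonoid.toList (f (prefWord u n))).length →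
    (FreeMonoid.toList (f (prefWord u n))).getD k false = v k

/-! ### Auxiliary lemmas -/

lemma phiOf_of_ne_nil (ℓ : Letter) (x : Bool) : ((phiOf ℓ) (FreeMonoid.of x)).toList ≠ [] := by
  cases ℓ <;> cases x <;> decide

lemma phiOf_ne_nil (ℓ : Letter) :
    ∀ l : List Bool, l ≠ [] → ((phiOf ℓ) (FreeMonoid.ofList l)).toList ≠ [] := by
  intro l hl
  obtain ⟨x, t, rfl⟩ := List.exists_cons_of_ne_nil hl
  rw [FreeMonoid.ofList_cons, map_mul, FreeMonoid.toList_mul]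
  exact fun h => phiOf_of_ne_nil ℓ x (List.append_eq_nil_iff.mp h).1

lemma phiW_cons (c : Letter) (t : List Letter) (s : FreeMonoid Bool) :
    phiW (c :: t) s = phiOf c (phiW t s) := rfl

lemma phiW_ne_nil (w : List Letter) :
    ∀ l : List Bool, l ≠ [] → ((phiW w) (FreeMonoid.ofList l)).toList ≠ [] := by
  induction w with
  | nil => intro l hl; exact hl
  | cons c t ih =>
    intro l hl
    rw [phiW_cons, ← FreeMonoid.ofList_toList (phiW t (FreeMonoid.ofList l))]
    exact phiOf_ne_nil c _ (ih l hl)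

lemma φβ_head (s : FreeMonoid Bool) (h : s.toList ≠ []) : (φβ s).toList.head? = some true := by
  obtain ⟨x, t, ht⟩ := List.exists_cons_of_ne_nil h
  have hs : s = FreeMonoid.of x * FreeMonoid.ofList t := by
    rw [← FreeMonoid.ofList_toList s, ht, FreeMonoid.ofList_cons]
  rw [hs, map_mul, FreeMonoid.toList_mul, List.head?_append]
  cases x <;> rfl

lemma φa_head (s : FreeMonoid Bool) (h : s.toList.head? = some true) :
    (φa s).toList.head? = some true := by
  have hne : s.toList ≠ [] := by intro hn; rw [hn] at h; simp at h
  obtain ⟨x, t, ht⟩ := List.exists_cons_of_ne_nil hne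
  have hx : x = true := by rw [ht] at h; simpa using h
  have hs : s = FreeMonoid.of x * FreeMonoid.ofList t := by
    rw [← FreeMonoid.ofList_toList s, ht, FreeMonoid.ofList_cons]
  rw [hs, map_mul, FreeMonoid.toList_mul, List.head?_append, hx]
  rfl

lemma head_true (m : ℕ) (r : List Letter) (x : Bool) :
    ((phiW (List.replicate m Letter.a ++ Letter.β :: r)) (FreeMonoid.of x)).toList.head?
      = some true := by
  induction m with
  | zero =>
    rw [List.replicate_zero, List.nil_append, phiW_cons]
    refine φβ_head _ ?_
    rw [show (FreeMonoid.of x : FreeMonoid Bool) = FreeMonoid.ofList [x] from rfl,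
      ← FreeMonoid.ofList_toList (phiW r (FreeMonoid.ofList [x]))]
    exact phiW_ne_nil r [x] (by simp)
  | succ n ih =>
    rw [List.replicate_succ, List.cons_append, phiW_cons]
    exact φa_head _ ih

/-- In a word over {a, α}, either all letters are a, or it ends with α a^k. -/
lemma decompose_lastα (p : List Letter) (hp : ∀ c ∈ p, c = Letter.a ∨ c = Letter.α) :
    (∀ c ∈ p, c = Letter.a) ∨
      ∃ p1 k, p = p1 ++ Letter.α :: List.replicate k Letter.a := by
  induction p using List.reverseRecOn with
  | nil => exact Or.inl (by simp)
  | append_singleton q c ih =>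
    have hq : ∀ d ∈ q, d = Letter.a ∨ d = Letter.α := fun d hd => hp d (by simp [hd])
    rcases hp c (by simp) with hc | hc
    · rcases ih hq with h | ⟨p1, k, hk⟩
      · left
        intro d hd
        rcases List.mem_append.mp hd with hd | hd
        · exact h d hd
        · rw [List.mem_singleton] at hd; rw [hd, hc]
      · right
        exact ⟨p1, k + 1, by simp [hk, hc, List.replicate_succ']⟩
    · right
      exact ⟨q, 0, by rw [hc]; simp⟩

/-- A nonempty word over {a, α} starting with a ends with a α^k. -/
lemma decompose_lastA (p : List Letter) (hh : p.head? = some Letter.a)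
    (hp : ∀ c ∈ p, c = Letter.a ∨ c = Letter.α) :
    ∃ p1 k, p = p1 ++ Letter.a :: List.replicate k Letter.α := by
  induction p using List.reverseRecOn with
  | nil => simp at hh
  | append_singleton q c ih =>
    have hq : ∀ d ∈ q, d = Letter.a ∨ d = Letter.α := fun d hd => hp d (by simp [hd])
    rcases hp c (by simp) with hc | hc
    · exact ⟨q, 0, by rw [hc]; simp⟩
    · have hqne : q ≠ [] := by
        rintro rfl
        rw [List.nil_append] at hh
        simp [hc] at hh
      obtain ⟨e, q', rfl⟩ := List.exists_cons_of_ne_nil hqne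
      have hh' : (e :: q').head? = some Letter.a := by simpa using hh
      obtain ⟨p1, k, hk⟩ := ih hh' hq
      exact ⟨p1, k + 1, by simp [hk, hc, List.replicate_succ']⟩

/-- If the fixed point `u` of `φ_w` starts with `0` and the normalized name `w` starts
with the letter `a`, then `w ∈ {a, α}*`. -/
theorem fixed_point_prefix_letter (w : List Letter) (u : ℕ → Bool)
    (hnorm : NormalizedW w)
    (hfix : InfMap (phiW w) u u)
    (hu0 : u 0 = false)
    (hhead : w.head? = some Letter.a) :
    ∀ c ∈ w, c = Letter.a ∨ c = Letter.α := by
  by_contra hcon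
  push_neg at hcon
  obtain ⟨c, hcw, hca, hcα⟩ := hcon
  set P : Letter → Bool := fun d => d = Letter.a ∨ d = Letter.α with hP
  have hdne : w.dropWhile P ≠ [] := by
    intro h
    have := List.dropWhile_eq_nil_iff.mp h c hcw
    simp [hP] at this
    tauto
  obtain ⟨d, r, hdr⟩ := List.exists_cons_of_ne_nil hdne
  have hdP : ¬ P d := by
    have h0 : 0 < (w.dropWhile P).length := by rw [hdr]; simp
    have hnot := List.dropWhile_get_zero_not P w h0
    have hget : (w.dropWhile P).get ⟨0, h0⟩ = d := by simp [hdr]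
    rwa [hget] at hnot
  have key : ∃ p : List Letter, p ++ d :: r = w ∧ ∀ e ∈ p, e = Letter.a ∨ e = Letter.α := by
    refine ⟨w.takeWhile P, ?_, ?_⟩
    · rw [← hdr]; exact List.takeWhile_append_dropWhile
    · intro e he
      have := List.mem_takeWhile_imp he
      simpa [hP] using this
  obtain ⟨p, hw, htw⟩ := key
  have hdb : d = Letter.b ∨ d = Letter.β := by
    cases d <;> simp [hP] at hdP ⊢
  rcases hdb with hdb | hdb
  · -- first bad letter is b : contradiction with normalization (no factor a α^k b)
    have hpne : p ≠ [] := by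
      rintro rfl
      rw [List.nil_append] at hw
      rw [← hw, hdb] at hhead
      simp at hhead
    obtain ⟨e, p', rfl⟩ := List.exists_cons_of_ne_nil hpne
    have hph : (e :: p').head? = some Letter.a := by
      rw [← hw] at hhead
      simpa using hhead
    obtain ⟨p1, k, hk⟩ := decompose_lastA _ hph htw
    refine (hnorm k).2 ⟨p1, r, ?_⟩
    rw [← hw, hk, hdb]
    simp [List.append_assoc]
  · -- first bad letter is β
    rcases decompose_lastα _ htw with hall | ⟨p1, k, hk⟩
    · -- w = a^m β r : the image of every letter starts with 1, contradicting u 0 = 0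
      have hrep := List.eq_replicate_of_mem hall
      have hw' : w = List.replicate p.length Letter.a ++ Letter.β :: r := by
        rw [← hw, hdb, ← hrep]
      have hpre : prefWord u 1 = FreeMonoid.of (u 0) := by
        simp [prefWord, List.range_succ, FreeMonoid.ofList_singleton]
      have hne : ((phiW w) (prefWord u 1)).toList ≠ [] := by
        rw [show prefWord u 1 = FreeMonoid.ofList [u 0] from by
          simp [prefWord, List.range_succ]]
        exact phiW_ne_nil w [u 0] (by simp)
      have hlen : 0 < ((phiW w) (prefWord u 1)).toList.length := List.length_pos_iff.mpr hne
      have hfix0 := hfix 1 0 hlen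
      have hhd : ((phiW w) (prefWord u 1)).toList.head? = some true := by
        rw [hpre, hw']
        exact head_true _ _ _
      rw [List.getD_eq_getElem?_getD, ← List.head?_eq_getElem?, hhd, hu0] at hfix0
      simp at hfix0
    · -- w contains the factor α a^k β : contradiction with normalization
      refine (hnorm k).1 ⟨p1, r, ?_⟩
      rw [← hw, hk, hdb]
      simp [List.append_assoc]
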